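/- If P: ℝⁿ → ℝ is a self-affine polynomial, then the algebraic surface S(P) = {x ∈ ℝⁿ : P(x) = 0} contains a non-trivial self-affine set. -/

import Mathlib

open Set

/-- `f : ℝⁿ → ℝⁿ` is an invertible, strictly contractive affine map
(its linear part is bijective and has operator norm `< 1`). -/
def IsAffineContraction {n : ℕ}
    (f : EuclideanSpace ℝ (Fin n) → EuclideanSpace ℝ (Fin n)) : Prop :=
  ∃ (T : EuclideanSpace ℝ (Fin n) →L[ℝ] EuclideanSpace ℝ (Fin n))
    (b : EuclideanSpace ℝ (Fin n)),
    Function.Bijective T ∧ ‖T‖ < 1 ∧ ∀ x, f x = T x + b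

/-- `E ⊆ ℝⁿ` is self-affine: it is nonempty, compact and is the attractor of an
affine iterated function system. -/
def IsSelfAffine {n : ℕ} (E : Set (EuclideanSpace ℝ (Fin n))) : Prop :=
  E.Nonempty ∧ IsCompact E ∧
    ∃ (ℓ : ℕ) (f : Fin ℓ → (EuclideanSpace ℝ (Fin n) → EuclideanSpace ℝ (Fin n))),
      (∀ i, IsAffineContraction (f i)) ∧ E = ⋃ i, f i '' E

/-- A strictly contractive invertible affine map `f` is a scaling factor for the
polynomial `P` if `P ∘ f = C • P` for some constant `C ∈ ℝ`. -/
def IsScalingFactor {n : ℕ}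
    (f : EuclideanSpace ℝ (Fin n) → EuclideanSpace ℝ (Fin n))
    (P : MvPolynomial (Fin n) ℝ) : Prop :=
  IsAffineContraction f ∧ ∃ C : ℝ, ∀ x : EuclideanSpace ℝ (Fin n),
    MvPolynomial.eval (fun i => (f x) i) P = C * MvPolynomial.eval (fun i => x i) P

lemma evalP_continuous {n : ℕ} (P : MvPolynomial (Fin n) ℝ) :
    Continuous fun x : EuclideanSpace ℝ (Fin n) => MvPolynomial.eval (fun i => x i) P := by
  apply (MvPolynomial.continuous_eval (p := P)).comp
  exact continuous_pi fun i => (EuclideanSpace.proj i).continuous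

lemma affine_lip {n : ℕ} {f : EuclideanSpace ℝ (Fin n) → EuclideanSpace ℝ (Fin n)}
    {T : EuclideanSpace ℝ (Fin n) →L[ℝ] EuclideanSpace ℝ (Fin n)}
    {b : EuclideanSpace ℝ (Fin n)} (heq : ∀ x, f x = T x + b)
    (x y : EuclideanSpace ℝ (Fin n)) : dist (f x) (f y) ≤ ‖T‖ * dist x y := by
  rw [heq, heq, dist_eq_norm, dist_eq_norm]
  have : T x + b - (T y + b) = T (x - y) := by rw [map_sub]; abel
  rw [this]
  exact T.le_opNorm _

lemma eval_fixed_zero {n : ℕ} (P : MvPolynomial (Fin n) ℝ) (hP : P.totalDegree ≠ 0)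
    {f : EuclideanSpace ℝ (Fin n) → EuclideanSpace ℝ (Fin n)}
    (hf : IsScalingFactor f P) {z : EuclideanSpace ℝ (Fin n)} (hz : f z = z) :
    MvPolynomial.eval (fun i => z i) P = 0 := by
  obtain ⟨⟨T, b, hbij, hTn, heq⟩, C, hC⟩ := hf
  set Q : EuclideanSpace ℝ (Fin n) → ℝ := fun x => MvPolynomial.eval (fun i => x i) P with hQ
  by_cases hC1 : C = 1
  · exfalso
    subst hC1
    have hlip : LipschitzWith ‖T‖₊ f :=
      LipschitzWith.of_dist_le_mul fun x y => by
        rw [coe_nnnorm]; exact affine_lip heq x y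
    have hcon : ContractingWith ‖T‖₊ f := ⟨by exact_mod_cast hTn, hlip⟩
    have hfix : z = ContractingWith.fixedPoint f hcon := hcon.fixedPoint_unique hz
    have hconst : ∀ x, Q x = Q z := by
      intro x
      have hiter : ∀ k, Q (f^[k] x) = Q x := by
        intro k
        induction k with
        | zero => simp
        | succ k ih =>
          rw [Function.iterate_succ_apply']
          have h4 : Q (f (f^[k] x)) = Q (f^[k] x) := by
            simpa [hQ] using hC (f^[k] x)
          rw [h4, ih]
      have h1 : Filter.Tendsto (fun k => f^[k] x) Filter.atTop (nhds z) := by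
        rw [hfix]; exact hcon.tendsto_iterate_fixedPoint x
      have h2 : Filter.Tendsto (fun k => Q (f^[k] x)) Filter.atTop (nhds (Q z)) :=
        ((evalP_continuous P).continuousAt.tendsto).comp h1
      have h3 : Filter.Tendsto (fun k => Q (f^[k] x)) Filter.atTop (nhds (Q x)) := by
        simp only [hiter]; exact tendsto_const_nhds
      exact tendsto_nhds_unique h3 h2
    have hPC : P = MvPolynomial.C (Q z) := by
      apply MvPolynomial.funext
      intro y
      have := hconst ((WithLp.equiv 2 (Fin n → ℝ)).symm y)
      simpa [hQ] using this
    apply hP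
    rw [hPC, MvPolynomial.totalDegree_C]
  · have h := hC z
    rw [hz] at h
    have : (C - 1) * Q z = 0 := by rw [sub_mul]; rw [hQ]; linarith
    rcases mul_eq_zero.1 this with h' | h'
    · exact absurd (by linarith : C = 1) hC1
    · exact h'

inductive Orbit {α : Type*} (f g : α → α) (a b : α) : α → Prop
  | base_left : Orbit f g a b a
  | base_right : Orbit f g a b b
  | stepf {x} : Orbit f g a b x → Orbit f g a b (f x)
  | stepg {x} : Orbit f g a b x → Orbit f g a b (g x)

lemma orbit_decomp {α : Type*} {f g : α → α} {a b : α} (ha : f a = a) (hb : g b = b) :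
    {x | Orbit f g a b x} = f '' {x | Orbit f g a b x} ∪ g '' {x | Orbit f g a b x} := by
  ext x
  constructor
  · intro hx
    induction hx with
    | base_left => exact Or.inl ⟨a, Orbit.base_left, ha⟩
    | base_right => exact Or.inr ⟨b, Orbit.base_right, hb⟩
    | stepf hx _ => exact Or.inl ⟨_, hx, rfl⟩
    | stepg hx _ => exact Or.inr ⟨_, hx, rfl⟩
  · rintro (⟨y, hy, rfl⟩ | ⟨y, hy, rfl⟩)
    · exact hy.stepf
    · exact hy.stepg

/-- If `P : ℝⁿ → ℝ` is a self-affine polynomial (a non-constant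
polynomial with two scaling factors whose fixed points are distinct), then the
algebraic surface `S(P) = {x ∈ ℝⁿ : P x = 0}` contains a non-trivial self-affine
set. -/
theorem selfAffine_polynomial_surface_contains_selfAffine
    {n : ℕ} (P : MvPolynomial (Fin n) ℝ) (hP : P.totalDegree ≠ 0)
    (f g : EuclideanSpace ℝ (Fin n) → EuclideanSpace ℝ (Fin n))
    (hf : IsScalingFactor f P) (hg : IsScalingFactor g P)
    (zf zg : EuclideanSpace ℝ (Fin n))
    (hzf : f zf = zf) (hzg : g zg = zg) (hne : zf ≠ zg) :
    ∃ E : Set (EuclideanSpace ℝ (Fin n)),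
      E ⊆ {x : EuclideanSpace ℝ (Fin n) | MvPolynomial.eval (fun i => x i) P = 0} ∧
      IsSelfAffine E ∧ E.Nontrivial := by
  obtain ⟨Tf, bf, hTfbij, hTfn, hfeq⟩ := hf.1
  obtain ⟨Tg, bg, hTgbij, hTgn, hgeq⟩ := hg.1
  obtain ⟨Cf, hCf⟩ := hf.2
  obtain ⟨Cg, hCg⟩ := hg.2
  have hfc : Continuous f := by
    have : f = fun x => Tf x + bf := funext hfeq
    rw [this]; exact Tf.continuous.add continuous_const
  have hgc : Continuous g := by
    have : g = fun x => Tg x + bg := funext hgeq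
    rw [this]; exact Tg.continuous.add continuous_const
  set O : Set (EuclideanSpace ℝ (Fin n)) := {x | Orbit f g zf zg x} with hO
  set c : ℝ := max ‖Tf‖ ‖Tg‖ with hc
  have hc0 : 0 ≤ c := le_trans (norm_nonneg Tf) (le_max_left _ _)
  have hc1 : c < 1 := max_lt hTfn hTgn
  set D : ℝ := dist (g zf) zf with hD
  set R : ℝ := max (dist zg zf) (D / (1 - c)) with hR
  have hR0 : 0 ≤ R := le_trans dist_nonneg (le_max_left _ _)
  have hbound : O ⊆ Metric.closedBall zf R := by
    intro x hx
    simp only [Metric.mem_closedBall]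
    induction hx with
    | base_left => simpa using hR0
    | base_right => exact le_max_left _ _
    | @stepf y hy ih =>
      have h1 := affine_lip hfeq y zf
      rw [hzf] at h1
      have : ‖Tf‖ * dist y zf ≤ c * R :=
        mul_le_mul (le_max_left _ _) ih dist_nonneg hc0
      nlinarith
    | @stepg y hy ih =>
      have h1 : dist (g y) zf ≤ dist (g y) (g zf) + D := dist_triangle _ _ _
      have h2 := affine_lip hgeq y zf
      have h3 : ‖Tg‖ * dist y zf ≤ c * R :=
        mul_le_mul (le_max_right _ _) ih dist_nonneg hc0
      have h4 : D / (1 - c) ≤ R := le_max_right _ _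
      have h5 : D ≤ (1 - c) * R := by
        rw [div_le_iff₀ (by linarith)] at h4; linarith
      nlinarith
  set E : Set (EuclideanSpace ℝ (Fin n)) := closure O with hE
  have hOE : O ⊆ E := subset_closure
  have hEball : E ⊆ Metric.closedBall zf R :=
    closure_minimal hbound Metric.isClosed_closedBall
  have hEcomp : IsCompact E :=
    (isCompact_closedBall zf R).of_isClosed_subset isClosed_closure hEball
  have hdecomp : O = f '' O ∪ g '' O := orbit_decomp hzf hzg
  have hfE : f '' E = closure (f '' O) :=
    Subset.antisymm (image_closure_subset_closure_image hfc)
      (closure_minimal (image_mono hOE) (hEcomp.image hfc).isClosed)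
  have hgE : g '' E = closure (g '' O) :=
    Subset.antisymm (image_closure_subset_closure_image hgc)
      (closure_minimal (image_mono hOE) (hEcomp.image hgc).isClosed)
  have hEdecomp : E = f '' E ∪ g '' E := by
    rw [hfE, hgE, ← closure_union, hE]
    conv_lhs => rw [hdecomp]
  set Z : Set (EuclideanSpace ℝ (Fin n)) :=
    {x | MvPolynomial.eval (fun i => x i) P = 0} with hZdef
  have hZ : IsClosed Z := isClosed_eq (evalP_continuous P) continuous_const
  have hOZ : O ⊆ Z := by
    intro x hx
    induction hx with
    | base_left => exact eval_fixed_zero P hP ⟨⟨Tf, bf, hTfbij, hTfn, hfeq⟩, Cf, hCf⟩ hzf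
    | base_right => exact eval_fixed_zero P hP ⟨⟨Tg, bg, hTgbij, hTgn, hgeq⟩, Cg, hCg⟩ hzg
    | @stepf y hy ih =>
      show MvPolynomial.eval (fun i => f y i) P = 0
      rw [hCf y, ih, mul_zero]
    | @stepg y hy ih =>
      show MvPolynomial.eval (fun i => g y i) P = 0
      rw [hCg y, ih, mul_zero]
  refine ⟨E, closure_minimal hOZ hZ,
    ⟨⟨zf, hOE Orbit.base_left⟩, hEcomp, 2, ![f, g], ?_, ?_⟩,
    zf, hOE Orbit.base_left, zg, hOE Orbit.base_right, hne⟩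
  · intro i
    fin_cases i
    · exact ⟨Tf, bf, hTfbij, hTfn, hfeq⟩
    · exact ⟨Tg, bg, hTgbij, hTgn, hgeq⟩
  · have : ⋃ i, ![f, g] i '' E = f '' E ∪ g '' E := by
      ext x
      simp [mem_iUnion, Fin.exists_fin_two]
    rw [this]
    exact hEdecomp
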